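/- Let M = [[α, xᵀ],[y, B]] be a square matrix with α a scalar, x, y column vectors, and B a square matrix. Then rank(M) = rank(B) + 2 if and only if xᵀ is not in the row space of B and y is not in the column space of B. -/

import Mathlib

open Matrix

section Aux

variable {F : Type*} [Field F] {m : ℕ}

lemma aux_finrank_span_insert_le {V : Type*} [AddCommGroup V] [Module F V]
    [FiniteDimensional F V] (s : Set V) (v : V) :
    Module.finrank F (Submodule.span F (insert v s)) ≤
      Module.finrank F (Submodule.span F s) + 1 := by
  rw [Submodule.span_insert]
  have h := Submodule.finrank_sup_add_finrank_inf_eq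
    (Submodule.span F ({v} : Set V)) (Submodule.span F s)
  have h1 : Module.finrank F (Submodule.span F ({v} : Set V)) ≤ 1 :=
    (finrank_span_le_card _).trans (by simp)
  omega

lemma aux_finrank_span_insert {V : Type*} [AddCommGroup V] [Module F V]
    [FiniteDimensional F V] (s : Set V) (v : V) (hv : v ∉ Submodule.span F s) :
    Module.finrank F (Submodule.span F (insert v s)) =
      Module.finrank F (Submodule.span F s) + 1 := by
  have hv0 : v ≠ 0 := fun h => hv (h ▸ Submodule.zero_mem _)
  rw [Submodule.span_insert]
  have h := Submodule.finrank_sup_add_finrank_inf_eq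
    (Submodule.span F ({v} : Set V)) (Submodule.span F s)
  have hinf : Submodule.span F ({v} : Set V) ⊓ Submodule.span F s = ⊥ := by
    rw [eq_bot_iff]
    intro w hw
    rw [Submodule.mem_inf] at hw
    obtain ⟨hw1, hw2⟩ := hw
    rw [Submodule.mem_span_singleton] at hw1
    obtain ⟨a, rfl⟩ := hw1
    rcases eq_or_ne a 0 with rfl | ha
    · simp
    · exact absurd (by simpa [ha] using Submodule.smul_mem _ a⁻¹ hw2) hv
  rw [hinf] at h
  have h1 : Module.finrank F (Submodule.span F ({v} : Set V)) = 1 :=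
    finrank_span_singleton hv0
  simp only [finrank_bot] at h
  omega

lemma aux_rank_eq_finrank_span_row {ι κ : Type*} [Fintype ι] [Fintype κ]
    (A : Matrix ι κ F) :
    A.rank = Module.finrank F (Submodule.span F (Set.range A)) :=
  Matrix.rank_eq_finrank_span_row A

lemma aux_rank_eq_finrank_span_cols {ι κ : Type*} [Fintype ι] [Fintype κ]
    (A : Matrix ι κ F) :
    A.rank = Module.finrank F (Submodule.span F (Set.range Aᵀ)) :=
  Matrix.rank_eq_finrank_span_cols A

/-- Rank of the bordered matrix is at most rank B + 1 when x is in the row space. -/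
lemma aux_rank_le (B : Matrix (Fin m) (Fin m) F) (x y : Fin m → F) (α : F)
    (M : Matrix (Fin 1 ⊕ Fin m) (Fin 1 ⊕ Fin m) F)
    (hM : M = Matrix.fromBlocks (Matrix.of fun _ _ => α) (Matrix.of fun _ j => x j)
      (Matrix.of fun i _ => y i) B)
    (hx : x ∈ Submodule.span F (Set.range B)) : M.rank ≤ B.rank + 1 := by
  set N : Matrix (Fin 1 ⊕ Fin m) (Fin m) F := Matrix.of (Sum.elim (fun _ => x) B) with hN
  set c₀ : Fin 1 ⊕ Fin m → F := Sum.elim (fun _ => α) y with hc₀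
  have hcoe : Mᵀ = Matrix.of (Sum.elim (fun _ : Fin 1 => c₀) Nᵀ) := by
    subst hM; ext k l; cases k <;> cases l <;> rfl
  have hMT : Set.range Mᵀ = insert c₀ (Set.range Nᵀ) := by
    rw [hcoe]
    show Set.range (Sum.elim (fun _ : Fin 1 => c₀) Nᵀ) = _
    exact (Set.Sum.elim_range _ _).trans (by rw [Set.range_const, Set.singleton_union])
  have hNrank : N.rank = Module.finrank F (Submodule.span F (Set.range Nᵀ)) :=
    aux_rank_eq_finrank_span_cols N
  have hNrow : N.rank = B.rank := by
    rw [aux_rank_eq_finrank_span_row]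
    have hr : Set.range N = insert x (Set.range B) := by
      show Set.range (Sum.elim (fun _ : Fin 1 => x) B) = _
      exact (Set.Sum.elim_range _ _).trans (by rw [Set.range_const, Set.singleton_union])
    rw [hr, Submodule.span_insert_eq_span hx, ← aux_rank_eq_finrank_span_row]
  calc M.rank
      = Module.finrank F (Submodule.span F (insert c₀ (Set.range Nᵀ))) := by
        rw [aux_rank_eq_finrank_span_cols, hMT]
    _ ≤ Module.finrank F (Submodule.span F (Set.range Nᵀ)) + 1 :=
        aux_finrank_span_insert_le _ _
    _ = N.rank + 1 := by rw [hNrank]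
    _ = B.rank + 1 := by rw [hNrow]

end Aux

/-- rank(M) = rank(B) + 2 iff xᵀ ∉ rowspace(B) and y ∉ colspace(B). -/
theorem stmt_1 {F : Type*} [Field F] {m : ℕ}
    (B : Matrix (Fin m) (Fin m) F) (x y : Fin m → F) (α : F)
    (M : Matrix (Fin 1 ⊕ Fin m) (Fin 1 ⊕ Fin m) F)
    (hM : M = Matrix.fromBlocks (Matrix.of fun _ _ => α) (Matrix.of fun _ j => x j)
      (Matrix.of fun i _ => y i) B) :
    M.rank = B.rank + 2 ↔
      x ∉ Submodule.span F (Set.range B) ∧ y ∉ Submodule.span F (Set.range Bᵀ) := by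
  have hMT : Mᵀ = Matrix.fromBlocks (Matrix.of fun _ _ => α) (Matrix.of fun _ j => y j)
      (Matrix.of fun i _ => x i) Bᵀ := by
    subst hM
    ext k l
    cases k <;> cases l <;> rfl
  constructor
  · intro h
    constructor
    · intro hx
      have := aux_rank_le B x y α M hM hx
      omega
    · intro hy
      have := aux_rank_le Bᵀ y x α Mᵀ hMT hy
      rw [Matrix.rank_transpose, Matrix.rank_transpose] at this
      omega
  · rintro ⟨hx, hy⟩
    set N : Matrix (Fin 1 ⊕ Fin m) (Fin m) F := Matrix.of (Sum.elim (fun _ => x) B) with hN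
    set c₀ : Fin 1 ⊕ Fin m → F := Sum.elim (fun _ => α) y with hc₀
    have hcoe : Mᵀ = Matrix.of (Sum.elim (fun _ : Fin 1 => c₀) Nᵀ) := by
      subst hM; ext k l; cases k <;> cases l <;> rfl
    have hrangeT : Set.range Mᵀ = insert c₀ (Set.range Nᵀ) := by
      rw [hcoe]
      show Set.range (Sum.elim (fun _ : Fin 1 => c₀) Nᵀ) = _
      exact (Set.Sum.elim_range _ _).trans (by rw [Set.range_const, Set.singleton_union])
    -- c₀ is not in the span of the columns of N
    have hc₀mem : c₀ ∉ Submodule.span F (Set.range Nᵀ) := by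
      intro hc
      apply hy
      let π : ((Fin 1 ⊕ Fin m) → F) →ₗ[F] (Fin m → F) := LinearMap.funLeft F F Sum.inr
      have h1 : π c₀ = y := rfl
      have h2 : π '' Set.range Nᵀ = Set.range Bᵀ := by
        rw [← Set.range_comp (g := π) (f := (Nᵀ : Fin m → Fin 1 ⊕ Fin m → F))]
        rfl
      have hmap := Submodule.mem_map_of_mem (f := π) hc
      rw [Submodule.map_span, h2, h1] at hmap
      exact hmap
    -- rank N = rank B + 1
    have hNrank : N.rank = B.rank + 1 := by
      rw [aux_rank_eq_finrank_span_row]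
      have hr : Set.range N = insert x (Set.range B) := by
        show Set.range (Sum.elim (fun _ : Fin 1 => x) B) = _
        exact (Set.Sum.elim_range _ _).trans (by rw [Set.range_const, Set.singleton_union])
      rw [hr, aux_finrank_span_insert _ _ hx, ← aux_rank_eq_finrank_span_row]
    have : M.rank = N.rank + 1 := by
      rw [aux_rank_eq_finrank_span_cols, hrangeT, aux_finrank_span_insert _ _ hc₀mem,
        ← aux_rank_eq_finrank_span_cols]
    omega
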